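/- Let n ≥ 1 and let F be an upset of a De Morgan lattice L. Then F is a classical prime n-filter on L if and only if there exists a lattice homomorphism h : L → (Fin n → Bool) (into the Boolean lattice Fin n → Bool with componentwise operations) satisfying h(¬x) i = !(h x i) for all x ∈ L and i : Fin n, such that F = {x : ∃ i, h x i = true}. -/

import Mathlib

/-- A De Morgan lattice: a distributive lattice with an antitone involution. -/
class DeMorgan (L : Type*) extends DistribLattice L where
  dneg : L → L
  dneg_dneg : ∀ x : L, dneg (dneg x) = x
  dneg_sup : ∀ x y : L, dneg (x ⊔ y) = dneg x ⊓ dneg y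

prefix:max "∼" => DeMorgan.dneg

section Defs

variable {α : Type*}

/-- An upward closed subset of a lattice. -/
def IsUpset [Lattice α] (F : Set α) : Prop :=
  ∀ ⦃x y : α⦄, x ∈ F → x ≤ y → y ∈ F

/-- A lattice filter: an upset closed under binary meets. -/
def IsLatFilter [Lattice α] (F : Set α) : Prop :=
  IsUpset F ∧ ∀ x y : α, x ∈ F → y ∈ F → x ⊓ y ∈ F

/-- An `n`-filter: an upset such that for every nonempty finite `Y`, if the meet of
every nonempty subset of `Y` of size at most `n` lies in `F`, then so does the meet of `Y`. -/
def IsNFilter [Lattice α] (n : ℕ) (F : Set α) : Prop :=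
  IsUpset F ∧ ∀ (Y : Finset α) (hY : Y.Nonempty),
    (∀ (X : Finset α) (hX : X.Nonempty), X ⊆ Y → X.card ≤ n → X.inf' hX id ∈ F) →
    Y.inf' hY id ∈ F

/-- A prime upset: `x ⊔ y ∈ F` implies `x ∈ F` or `y ∈ F`. -/
def IsPrimeUpset [Lattice α] (F : Set α) : Prop :=
  ∀ x y : α, x ⊔ y ∈ F → x ∈ F ∨ y ∈ F

/-- A downward closed subset of a lattice. -/
def IsDownset [Lattice α] (I : Set α) : Prop :=
  ∀ ⦃x y : α⦄, x ∈ I → y ≤ x → y ∈ I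

/-- A lattice ideal: a downset closed under binary joins. -/
def IsIdeal [Lattice α] (I : Set α) : Prop :=
  IsDownset I ∧ ∀ x y : α, x ∈ I → y ∈ I → x ⊔ y ∈ I

/-- An `n`-ideal: the order dual notion of an `n`-filter. -/
def IsNIdeal [Lattice α] (n : ℕ) (I : Set α) : Prop :=
  IsDownset I ∧ ∀ (Y : Finset α) (hY : Y.Nonempty),
    (∀ (X : Finset α) (hX : X.Nonempty), X ⊆ Y → X.card ≤ n → X.sup' hX id ∈ I) →
    Y.sup' hY id ∈ I

variable {L : Type*} [DeMorgan L]

/-- Almost complete upset: `x ∈ F` implies `x ⊓ (y ⊔ ∼y) ∈ F`. -/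
def AlmostComplete (F : Set L) : Prop := ∀ x ∈ F, ∀ y : L, x ⊓ (y ⊔ ∼y) ∈ F

/-- Complete upset: almost complete and nonempty. -/
def IsCompleteUpset (F : Set L) : Prop := AlmostComplete F ∧ F.Nonempty

/-- Almost consistent upset: `(x ⊓ ∼x) ⊔ y ∈ F` implies `y ∈ F`. -/
def AlmostConsistent (F : Set L) : Prop := ∀ x y : L, (x ⊓ ∼x) ⊔ y ∈ F → y ∈ F

/-- Consistent upset: almost consistent and not total. -/
def IsConsistentUpset (F : Set L) : Prop := AlmostConsistent F ∧ F ≠ Set.univ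

/-- Classical upset: complete and consistent. -/
def IsClassicalUpset (F : Set L) : Prop := IsCompleteUpset F ∧ IsConsistentUpset F

/-- Kalman upset. -/
def IsKalmanUpset (F : Set L) : Prop :=
  ∀ x y z u : L, ((x ⊓ ∼x) ⊓ z) ⊔ u ∈ F → ((y ⊔ ∼y) ⊓ z) ⊔ u ∈ F

/-- A homomorphism of De Morgan lattices. -/
def IsDMHom {L M : Type*} [DeMorgan L] [DeMorgan M] (h : L → M) : Prop :=
  (∀ x y : L, h (x ⊓ y) = h x ⊓ h y) ∧ (∀ x y : L, h (x ⊔ y) = h x ⊔ h y) ∧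
    ∀ x : L, h (∼x) = ∼(h x)

/-- The filter generated by all elements of the form `x ⊔ ∼x`. -/
def Fcomp (L : Type*) [DeMorgan L] : Set L :=
  {a | ∃ (s : Finset L) (hs : s.Nonempty), s.inf' hs (fun x => x ⊔ ∼x) ≤ a}

/-- The `n`-filter generated by a set. -/
def nFilterGen (n : ℕ) (U : Set L) : Set L :=
  ⋂₀ {F : Set L | IsNFilter n F ∧ U ⊆ F}

/-- `Comp U`. -/
def CompCl (U : Set L) : Set L := {x | ∃ a ∈ U, ∃ f ∈ Fcomp L, a ⊓ f ≤ x}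

/-- `Cons U`. -/
def ConsCl (U : Set L) : Set L := {x | ∃ f ∈ Fcomp L, ∼f ⊔ x ∈ U}

/-- A congruence of De Morgan lattices, as a binary relation. -/
def IsCongruence (θ : L → L → Prop) : Prop :=
  Equivalence θ ∧
  (∀ a b c d : L, θ a b → θ c d → θ (a ⊓ c) (b ⊓ d)) ∧
  (∀ a b c d : L, θ a b → θ c d → θ (a ⊔ c) (b ⊔ d)) ∧
  ∀ a b : L, θ a b → θ (∼a) (∼b)

end Defs

/-- The four-element De Morgan lattice `DM₁` on `Bool × Bool`. -/
instance : DeMorgan (Bool × Bool) :=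
  { (inferInstance : DistribLattice (Bool × Bool)) with
    dneg := fun p => (!p.2, !p.1)
    dneg_dneg := by decide
    dneg_sup := by decide }

/-- Powers of `DM₁`, with componentwise operations. -/
instance {ι : Type*} : DeMorgan (ι → Bool × Bool) :=
  { (inferInstance : DistribLattice (ι → Bool × Bool)) with
    dneg := fun f i => ∼(f i)
    dneg_dneg := fun f => funext fun i => DeMorgan.dneg_dneg (f i)
    dneg_sup := fun f g => funext fun i => DeMorgan.dneg_sup (f i) (g i) }

section Helpers

open Finset

variable {L : Type*} [DeMorgan L]

private def Incomp (F : Set L) (k : ℕ) : Prop :=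
  ∃ c : Fin k → L, (∀ i, c i ∈ F) ∧ ∀ i j, i ≠ j → c i ⊓ c j ∉ F

private def PFNice (P : Set L) : Prop :=
  IsUpset P ∧ (∀ x y : L, x ∈ P → y ∈ P → x ⊓ y ∈ P) ∧ IsPrimeUpset P ∧
    (∀ y : L, y ⊔ ∼y ∈ P) ∧ (∀ y : L, y ⊓ ∼y ∉ P)

private lemma notmem_of_le {F : Set L} (hU : IsUpset F) {u v : L} (h : u ≤ v) (hv : v ∉ F) :
    u ∉ F := fun hu => hv (hU hu h)

private lemma inc_notmem {F : Set L} (hU : IsUpset F) (hC : AlmostConsistent F)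
    (hne : F ≠ Set.univ) (x : L) : x ⊓ ∼x ∉ F := by
  obtain ⟨y₀, hy₀⟩ := (Set.ne_univ_iff_exists_notMem F).mp hne
  intro hx
  exact hy₀ (hC x y₀ (hU hx le_sup_left))

private lemma incomp_T1 {F : Set L} (hU : IsUpset F) {a b : L} (hb : b ∈ F)
    (hab : a ⊓ b ∉ F) {k : ℕ} (h : Incomp {x : L | x ⊓ a ∈ F} k) : Incomp F (k + 1) := by
  obtain ⟨c, hc1, hc2⟩ := h
  refine ⟨fun i => if h : i.1 < k then c ⟨i.1, h⟩ ⊓ a else b, fun i => ?_, fun i j hij => ?_⟩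
  · dsimp only
    by_cases h : i.1 < k
    · rw [dif_pos h]; exact hc1 ⟨i.1, h⟩
    · rw [dif_neg h]; exact hb
  · dsimp only
    have hi := i.isLt; have hj := j.isLt
    by_cases h1 : i.1 < k <;> by_cases h2 : j.1 < k
    · rw [dif_pos h1, dif_pos h2]
      have hne' : (⟨i.1, h1⟩ : Fin k) ≠ ⟨j.1, h2⟩ := by
        intro h
        have hv : i.1 = j.1 := by simpa using h
        exact hij (Fin.ext hv)
      refine notmem_of_le hU ?_ (hc2 _ _ hne')
      exact le_inf (le_inf (inf_le_left.trans inf_le_left) (inf_le_right.trans inf_le_left))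
        (inf_le_left.trans inf_le_right)
    · rw [dif_pos h1, dif_neg h2]
      exact notmem_of_le hU (le_inf (inf_le_left.trans inf_le_right) inf_le_right) hab
    · rw [dif_neg h1, dif_pos h2]
      exact notmem_of_le hU (le_inf (inf_le_right.trans inf_le_right) inf_le_left) hab
    · exact absurd (Fin.ext (by omega)) hij

private lemma incomp_T2 {F : Set L} (hU : IsUpset F) (hxn : ∀ x : L, x ⊓ ∼x ∉ F) {a : L}
    {s t : ℕ} (h1 : Incomp {x : L | x ⊓ a ∈ F} s) (h2 : Incomp {x : L | x ⊓ ∼a ∈ F} t) :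
    Incomp F (s + t) := by
  obtain ⟨c, hc1, hc2⟩ := h1
  obtain ⟨d, hd1, hd2⟩ := h2
  refine ⟨fun i => if h : i.1 < s then c ⟨i.1, h⟩ ⊓ a else d ⟨i.1 - s, by omega⟩ ⊓ ∼a,
    fun i => ?_, fun i j hij => ?_⟩
  · dsimp only
    by_cases h : i.1 < s
    · rw [dif_pos h]; exact hc1 ⟨i.1, h⟩
    · rw [dif_neg h]; exact hd1 _
  · dsimp only
    have hi := i.isLt; have hj := j.isLt
    by_cases h1 : i.1 < s <;> by_cases h2 : j.1 < s
    · rw [dif_pos h1, dif_pos h2]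
      have hne' : (⟨i.1, h1⟩ : Fin s) ≠ ⟨j.1, h2⟩ := by
        intro h
        have hv : i.1 = j.1 := by simpa using h
        exact hij (Fin.ext hv)
      refine notmem_of_le hU ?_ (hc2 _ _ hne')
      exact le_inf (le_inf (inf_le_left.trans inf_le_left) (inf_le_right.trans inf_le_left))
        (inf_le_left.trans inf_le_right)
    · rw [dif_pos h1, dif_neg h2]
      refine notmem_of_le hU ?_ (hxn a)
      exact le_inf (inf_le_left.trans inf_le_right) (inf_le_right.trans inf_le_right)
    · rw [dif_neg h1, dif_pos h2]
      refine notmem_of_le hU ?_ (hxn a)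
      exact le_inf (inf_le_right.trans inf_le_right) (inf_le_left.trans inf_le_right)
    · rw [dif_neg h1, dif_neg h2]
      have hne' : (⟨i.1 - s, by omega⟩ : Fin t) ≠ ⟨j.1 - s, by omega⟩ := by
        intro h
        have := congrArg Fin.val h
        simp only at this
        exact hij (Fin.ext (by omega))
      refine notmem_of_le hU ?_ (hd2 _ _ hne')
      exact le_inf (le_inf (inf_le_left.trans inf_le_left) (inf_le_right.trans inf_le_left))
        (inf_le_left.trans inf_le_right)

private lemma rel_props {F : Set L} (hU : IsUpset F) (hP : IsPrimeUpset F)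
    (hAC : AlmostComplete F) (hCon : AlmostConsistent F) (hne : F ≠ Set.univ)
    {c : L} (hc : c ∈ F) :
    IsUpset {x : L | x ⊓ c ∈ F} ∧ IsPrimeUpset {x : L | x ⊓ c ∈ F} ∧
    AlmostComplete {x : L | x ⊓ c ∈ F} ∧ ({x : L | x ⊓ c ∈ F}).Nonempty ∧
    AlmostConsistent {x : L | x ⊓ c ∈ F} ∧ {x : L | x ⊓ c ∈ F} ≠ Set.univ := by
  refine ⟨?_, ?_, ?_, ?_, ?_, ?_⟩
  · intro x y hx hxy
    exact hU hx (inf_le_inf_right c hxy)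
  · intro x y hxy
    have : (x ⊓ c) ⊔ (y ⊓ c) ∈ F := by rwa [← inf_sup_right]
    exact hP _ _ this
  · intro x hx y
    show (x ⊓ (y ⊔ ∼y)) ⊓ c ∈ F
    rw [inf_right_comm]
    exact hAC _ hx y
  · refine ⟨c, ?_⟩
    show c ⊓ c ∈ F
    rwa [inf_idem]
  · intro x y hxy
    have h1 : ((x ⊓ ∼x) ⊔ y) ⊓ c ≤ (x ⊓ ∼x) ⊔ (y ⊓ c) := by
      rw [inf_sup_right]
      exact sup_le_sup inf_le_left le_rfl
    exact hCon x (y ⊓ c) (hU hxy h1)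
  · intro h
    have h1 : ∼c ∈ {x : L | x ⊓ c ∈ F} := h ▸ Set.mem_univ _
    have h2 : ∼c ⊓ c ∈ F := h1
    rw [inf_comm] at h2
    exact inc_notmem hU hCon hne c h2

private lemma cover_lemma : ∀ r : ℕ, 1 ≤ r → ∀ F : Set L, IsUpset F → IsPrimeUpset F →
    AlmostComplete F → F.Nonempty → AlmostConsistent F → F ≠ Set.univ →
    ¬ Incomp F (r + 1) →
    ∃ m : ℕ, 1 ≤ m ∧ m ≤ r ∧ ∃ P : Fin m → Set L, (∀ i, PFNice (P i)) ∧ F = ⋃ i, P i := by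
  intro r
  induction r using Nat.strong_induction_on with
  | _ r IH =>
  intro hr F hU hP hAC hne hCon hneu hInc
  classical
  by_cases h2 : Incomp F 2
  case neg =>
    refine ⟨1, le_refl 1, hr, fun _ => F, fun _ => ?_, (Set.iUnion_const F).symm⟩
    refine ⟨hU, ?_, hP, ?_, inc_notmem hU hCon hneu⟩
    · intro x y hx hy
      by_contra hxy
      refine h2 ⟨fun i => if i.1 = 0 then x else y, fun i => ?_, fun i j hij => ?_⟩
      · dsimp only
        by_cases h : i.1 = 0 <;> simp [h, hx, hy]
      · dsimp only
        have hi := i.isLt; have hj := j.isLt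
        by_cases h : i.1 = 0 <;> by_cases h' : j.1 = 0
        · exact absurd (Fin.ext (by omega)) hij
        · simpa [h, h'] using hxy
        · rw [if_neg h, if_pos h', inf_comm]; exact hxy
        · exact absurd (Fin.ext (by omega)) hij
    · intro y
      obtain ⟨x₀, hx₀⟩ := hne
      exact hU (hAC x₀ hx₀ y) inf_le_right
  case pos =>
    obtain ⟨cc, hcF, hcP⟩ := h2
    have hab : cc 0 ⊓ cc 1 ∉ F := hcP 0 1 (by decide)
    have haF : cc 0 ∈ F := hcF 0
    have hbF : cc 1 ∈ F := hcF 1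
    set a := cc 0
    set b := cc 1
    have hr2 : 2 ≤ r := by
      by_contra h
      have hreq : r = 1 := by omega
      subst hreq
      exact hInc ⟨cc, hcF, hcP⟩
    set Fa := {x : L | x ⊓ a ∈ F} with hFa_def
    set Fb := {x : L | x ⊓ ∼a ∈ F} with hFb_def
    have hcover : ∀ x ∈ F, x ∈ Fa ∨ x ∈ Fb := by
      intro x hx
      have h1 : x ⊓ (a ⊔ ∼a) ∈ F := hAC x hx a
      rw [inf_sup_left] at h1
      exact hP _ _ h1
    have hbFb : b ∈ Fb := by
      rcases hcover b hbF with h | h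
      · exfalso
        have : b ⊓ a ∈ F := h
        rw [inf_comm] at this
        exact hab this
      · exact h
    have hnaF : ∼a ∈ F := hU hbFb inf_le_right
    obtain ⟨hUa, hPa, hACa, hnea, hCona, hneua⟩ := rel_props hU hP hAC hCon hneu haF
    obtain ⟨hUb, hPb, hACb, hneb, hConb, hneub⟩ := rel_props hU hP hAC hCon hneu hnaF
    have hIa1 : Incomp Fa 1 := by
      refine ⟨fun _ => a, fun _ => ?_, fun i j hij => absurd (Subsingleton.elim i j) hij⟩
      show a ⊓ a ∈ F
      rwa [inf_idem]
    set s := Nat.findGreatest (Incomp Fa) (r - 1) with hs_def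
    have hs1 : 1 ≤ s := Nat.le_findGreatest (by omega) hIa1
    have hsr : s ≤ r - 1 := Nat.findGreatest_le _
    have hIas : Incomp Fa s := Nat.findGreatest_spec (by omega) hIa1
    have hnot_a : ¬ Incomp Fa (s + 1) := by
      intro hcon
      by_cases hle : s + 1 ≤ r - 1
      · exact Nat.findGreatest_is_greatest (by omega) hle hcon
      · have h3 := incomp_T1 hU hbF hab hcon
        have heq : s + 1 + 1 = r + 1 := by omega
        exact hInc (heq ▸ h3)
    have hnot_b : ¬ Incomp Fb (r - s + 1) := by
      intro hcon
      have h3 := incomp_T2 hU (inc_notmem hU hCon hneu) hIas hcon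
      have heq : s + (r - s + 1) = r + 1 := by omega
      exact hInc (heq ▸ h3)
    obtain ⟨m₁, hm₁1, hm₁s, P₁, hP₁, hFaeq⟩ :=
      IH s (by omega) hs1 Fa hUa hPa hACa hnea hCona hneua hnot_a
    obtain ⟨m₂, hm₂1, hm₂s, P₂, hP₂, hFbeq⟩ :=
      IH (r - s) (by omega) (by omega) Fb hUb hPb hACb hneb hConb hneub hnot_b
    refine ⟨m₁ + m₂, by omega, by omega,
      fun i => if h : i.1 < m₁ then P₁ ⟨i.1, h⟩ else P₂ ⟨i.1 - m₁, by omega⟩, fun i => ?_, ?_⟩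
    · dsimp only
      by_cases h : i.1 < m₁
      · rw [dif_pos h]; exact hP₁ _
      · rw [dif_neg h]; exact hP₂ _
    · ext x
      simp only [Set.mem_iUnion]
      constructor
      · intro hx
        rcases hcover x hx with hxa | hxb
        · rw [hFaeq] at hxa
          obtain ⟨j, hj⟩ := Set.mem_iUnion.mp hxa
          refine ⟨⟨j.1, by omega⟩, ?_⟩
          dsimp only
          rw [dif_pos (show j.1 < m₁ from j.isLt)]
          convert hj using 2
        · rw [hFbeq] at hxb
          obtain ⟨j, hj⟩ := Set.mem_iUnion.mp hxb
          refine ⟨⟨m₁ + j.1, by omega⟩, ?_⟩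
          dsimp only
          rw [dif_neg (by omega : ¬ m₁ + j.1 < m₁)]
          have : (⟨m₁ + j.1 - m₁, by omega⟩ : Fin m₂) = j := Fin.ext (by simp)
          rw [this]
          exact hj
      · rintro ⟨i, hi⟩
        by_cases h : i.1 < m₁
        · rw [dif_pos h] at hi
          have hxFa : x ∈ Fa := hFaeq ▸ Set.mem_iUnion.mpr ⟨_, hi⟩
          exact hU hxFa inf_le_left
        · rw [dif_neg h] at hi
          have hxFb : x ∈ Fb := hFbeq ▸ Set.mem_iUnion.mpr ⟨_, hi⟩
          exact hU hxFb inf_le_left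

private lemma rank_lemma {n : ℕ} (hn : 1 ≤ n) {F : Set L} (hU : IsUpset F)
    (hP : IsPrimeUpset F)
    (hN : ∀ (Y : Finset L) (hY : Y.Nonempty),
      (∀ (X : Finset L) (hX : X.Nonempty), X ⊆ Y → X.card ≤ n → X.inf' hX id ∈ F) →
      Y.inf' hY id ∈ F) :
    ¬ Incomp F (n + 1) := by
  classical
  rintro ⟨c, hcF, hcP⟩
  have hne : ∀ i : Fin (n + 1), (Finset.univ.erase i).Nonempty := by
    intro i
    rw [← Finset.card_pos, Finset.card_erase_of_mem (Finset.mem_univ i), Finset.card_univ,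
      Fintype.card_fin]
    omega
  set y : Fin (n + 1) → L := fun i => (Finset.univ.erase i).sup' (hne i) c with hy_def
  have hD : ((Finset.univ : Finset (Fin (n + 1) × Fin (n + 1))).filter
      fun p => p.1 ≠ p.2).Nonempty := by
    refine ⟨(⟨0, by omega⟩, ⟨1, by omega⟩), ?_⟩
    simp [Finset.mem_filter, Fin.ext_iff]
  set P : L := (((Finset.univ : Finset (Fin (n + 1) × Fin (n + 1))).filter
      fun p => p.1 ≠ p.2)).sup' hD (fun p => c p.1 ⊓ c p.2) with hP_def
  have hPnot : P ∉ F := by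
    rw [hP_def]
    refine Finset.sup'_induction hD (fun p => c p.1 ⊓ c p.2) (p := fun x => x ∉ F) ?_ ?_
    · intro u hu v hv hm
      exact (hP u v hm).elim hu hv
    · intro p hp
      exact hcP p.1 p.2 (Finset.mem_filter.mp hp).2
  have hyc : ∀ i, y i ⊓ c i ≤ P := by
    intro i
    refine Finset.sup'_induction (hne i) c (p := fun x => x ⊓ c i ≤ P) ?_ ?_
    · intro u hu v hv
      rw [inf_sup_right]
      exact sup_le hu hv
    · intro l hl
      exact Finset.le_sup' (f := fun p : Fin (n + 1) × Fin (n + 1) => c p.1 ⊓ c p.2)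
        (b := (l, i)) (Finset.mem_filter.mpr ⟨Finset.mem_univ _, (Finset.mem_erase.mp hl).1⟩)
  have claim : ∀ (S : Finset (Fin (n + 1))) (hS : S.Nonempty) (hSc : Sᶜ.Nonempty),
      S.inf' hS y ≤ P ⊔ Sᶜ.sup' hSc c := by
    intro S hS
    induction hS using Finset.Nonempty.cons_induction with
    | singleton i =>
      intro hSc
      rw [Finset.inf'_singleton]
      refine le_trans ?_ le_sup_right
      refine Finset.sup'_le (hne i) c fun l hl => ?_
      exact Finset.le_sup' c (Finset.mem_compl.mpr (by
        simp only [Finset.mem_singleton]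
        exact (Finset.mem_erase.mp hl).1))
    | cons i S hiS hS IHp =>
      intro hSc'
      have hScS : Sᶜ.Nonempty := by
        obtain ⟨w, hw⟩ := hSc'
        refine ⟨w, Finset.mem_compl.mpr fun hwS => ?_⟩
        exact (Finset.mem_compl.mp hw) (Finset.mem_cons.mpr (Or.inr hwS))
      have hkey : y i ⊓ Sᶜ.sup' hScS c ≤ P ⊔ (Finset.cons i S hiS)ᶜ.sup' hSc' c := by
        refine Finset.sup'_induction hScS c
          (p := fun x => y i ⊓ x ≤ P ⊔ (Finset.cons i S hiS)ᶜ.sup' hSc' c) ?_ ?_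
        · intro u hu v hv
          rw [inf_sup_left]
          exact sup_le hu hv
        · intro j hj
          by_cases hji : j = i
          · subst hji
            exact le_trans (hyc j) le_sup_left
          · refine le_trans inf_le_right (le_trans (Finset.le_sup' c ?_) le_sup_right)
            refine Finset.mem_compl.mpr ?_
            rw [Finset.mem_cons]
            push_neg
            exact ⟨hji, Finset.mem_compl.mp hj⟩
      rw [Finset.inf'_cons hS]
      calc y i ⊓ S.inf' hS y ≤ y i ⊓ (P ⊔ Sᶜ.sup' hScS c) := inf_le_inf_left _ (IHp hScS)
        _ = y i ⊓ P ⊔ y i ⊓ Sᶜ.sup' hScS c := inf_sup_left _ _ _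
        _ ≤ P ⊔ (Finset.cons i S hiS)ᶜ.sup' hSc' c :=
          sup_le (le_trans inf_le_right le_sup_left) hkey
  have i₀ : Fin (n + 1) := ⟨0, by omega⟩
  have huniv : (Finset.univ : Finset (Fin (n + 1))).Nonempty := ⟨i₀, Finset.mem_univ _⟩
  have h2 : (Finset.univ.erase i₀).inf' (hne i₀) y ≤ P ⊔ c i₀ := by
    have hcompl : ((Finset.univ.erase i₀)ᶜ).Nonempty :=
      ⟨i₀, Finset.mem_compl.mpr (by simp)⟩
    refine le_trans (claim _ (hne i₀) hcompl) (sup_le_sup_left ?_ P)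
    refine Finset.sup'_le hcompl c fun l hl => ?_
    have hl' : l = i₀ := by
      by_contra hne'
      exact (Finset.mem_compl.mp hl) (Finset.mem_erase.mpr ⟨hne', Finset.mem_univ _⟩)
    exact hl' ▸ le_rfl
  have h3 : Finset.univ.inf' huniv y ≤ P := by
    have hle1 : Finset.univ.inf' huniv y ≤ (Finset.univ.erase i₀).inf' (hne i₀) y :=
      Finset.le_inf' _ _ fun b hb => Finset.inf'_le _ (Finset.mem_univ b)
    have hle2 : Finset.univ.inf' huniv y ≤ (P ⊔ c i₀) ⊓ y i₀ :=
      le_inf (le_trans hle1 h2) (Finset.inf'_le _ (Finset.mem_univ i₀))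
    refine le_trans hle2 ?_
    rw [inf_sup_right]
    refine sup_le inf_le_left ?_
    rw [inf_comm]
    exact hyc i₀
  set Y : Finset L := Finset.univ.image y with hY_def
  have hYne : Y.Nonempty := ⟨y i₀, Finset.mem_image_of_mem y (Finset.mem_univ i₀)⟩
  have hsub : ∀ (X : Finset L) (hX : X.Nonempty), X ⊆ Y → X.card ≤ n → X.inf' hX id ∈ F := by
    intro X hX hXY hXn
    set g : L → Fin (n + 1) := fun x => if h : ∃ j, y j = x then h.choose else i₀ with hg_def
    have hnsub : ¬ (Finset.univ : Finset (Fin (n + 1))) ⊆ X.image g := by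
      intro hss
      have h4 := Finset.card_le_card hss
      rw [Finset.card_univ, Fintype.card_fin] at h4
      have h5 := Finset.card_image_le (s := X) (f := g)
      omega
    obtain ⟨i₁, hi₁⟩ : ∃ i, i ∉ X.image g := by
      by_contra hcon
      push_neg at hcon
      exact hnsub fun i _ => hcon i
    have hlb : ∀ x ∈ X, c i₁ ≤ x := by
      intro x hx
      obtain ⟨j, _, hj⟩ := Finset.mem_image.mp (hXY hx)
      have hex : ∃ j, y j = x := ⟨j, hj⟩
      have hgx : y (g x) = x := by
        rw [hg_def]
        simp only [dif_pos hex]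
        exact hex.choose_spec
      have hne1 : i₁ ≠ g x := fun h => hi₁ (h ▸ Finset.mem_image_of_mem g hx)
      calc c i₁ ≤ y (g x) := Finset.le_sup' c (Finset.mem_erase.mpr ⟨hne1, Finset.mem_univ _⟩)
        _ = x := hgx
    exact hU (hcF i₁) (Finset.le_inf' hX id fun b hb => hlb b hb)
  have hYF := hN Y hYne hsub
  have hYP : Y.inf' hYne id ≤ P := by
    refine le_trans ?_ h3
    exact Finset.le_inf' huniv y fun i _ =>
      Finset.inf'_le id (Finset.mem_image_of_mem y (Finset.mem_univ i))
  exact hPnot (hU hYF hYP)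

end Helpers

/-- classical prime `n`-filters are precisely the preimages of the designated
set of `BAₙ` under lattice homomorphisms into `Fin n → Bool` commuting with negation. -/
theorem statement6 {L : Type*} [DeMorgan L] [Nonempty L] (n : ℕ) (hn : 1 ≤ n)
    (F : Set L) (hF : IsUpset F) :
    (IsClassicalUpset F ∧ IsPrimeUpset F ∧ IsNFilter n F) ↔
      ∃ h : L → (Fin n → Bool),
        (∀ x y : L, h (x ⊓ y) = h x ⊓ h y) ∧
        (∀ x y : L, h (x ⊔ y) = h x ⊔ h y) ∧
        (∀ (x : L) (i : Fin n), h (∼x) i = !(h x i)) ∧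
        F = {x : L | ∃ i : Fin n, h x i = true} := by
  classical
  constructor
  · rintro ⟨⟨⟨hAC, hne⟩, hCon, hneu⟩, hPr, hUF, hNF⟩
    have hrank := rank_lemma hn hF hPr hNF
    obtain ⟨m, hm1, hmn, P, hPnice, hFeq⟩ :=
      cover_lemma n hn F hF hPr hAC hne hCon hneu hrank
    have hidx : ∀ i : Fin n, min i.1 (m - 1) < m := fun i => by omega
    set idx : Fin n → Fin m := fun i => ⟨min i.1 (m - 1), hidx i⟩ with hidx_def
    refine ⟨fun x i => if x ∈ P (idx i) then true else false, ?_, ?_, ?_, ?_⟩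
    · intro x y
      refine funext fun i => ?_
      obtain ⟨hu, hm', hp, hcmp, hcons⟩ := hPnice (idx i)
      show (if x ⊓ y ∈ P (idx i) then true else false) =
        (if x ∈ P (idx i) then true else false) ⊓ (if y ∈ P (idx i) then true else false)
      by_cases h1 : x ∈ P (idx i) <;> by_cases h2 : y ∈ P (idx i)
      · rw [if_pos h1, if_pos h2, if_pos (hm' _ _ h1 h2)]; decide
      · rw [if_pos h1, if_neg h2, if_neg (fun hm => h2 (hu hm inf_le_right))]; decide
      · rw [if_neg h1, if_pos h2, if_neg (fun hm => h1 (hu hm inf_le_left))]; decide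
      · rw [if_neg h1, if_neg h2, if_neg (fun hm => h1 (hu hm inf_le_left))]; decide
    · intro x y
      refine funext fun i => ?_
      obtain ⟨hu, hm', hp, hcmp, hcons⟩ := hPnice (idx i)
      show (if x ⊔ y ∈ P (idx i) then true else false) =
        (if x ∈ P (idx i) then true else false) ⊔ (if y ∈ P (idx i) then true else false)
      by_cases h1 : x ∈ P (idx i) <;> by_cases h2 : y ∈ P (idx i)
      · rw [if_pos h1, if_pos h2, if_pos (hu h1 le_sup_left)]; decide
      · rw [if_pos h1, if_neg h2, if_pos (hu h1 le_sup_left)]; decide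
      · rw [if_neg h1, if_pos h2, if_pos (hu h2 le_sup_right)]; decide
      · rw [if_neg h1, if_neg h2, if_neg (fun hm => (hp _ _ hm).elim h1 h2)]; decide
    · intro x i
      obtain ⟨hu, hm', hp, hcmp, hcons⟩ := hPnice (idx i)
      show (if ∼x ∈ P (idx i) then true else false) =
        !(if x ∈ P (idx i) then true else false)
      by_cases h1 : x ∈ P (idx i)
      · rw [if_pos h1, if_neg (fun hm => hcons x (hm' _ _ h1 hm))]; decide
      · rw [if_neg h1, if_pos ((hp x (∼x) (hcmp x)).resolve_left h1)]; decide
    · ext x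
      simp only [Set.mem_setOf_eq]
      constructor
      · intro hx
        rw [hFeq] at hx
        obtain ⟨j, hj⟩ := Set.mem_iUnion.mp hx
        refine ⟨⟨j.1, by omega⟩, ?_⟩
        have hixd : idx (⟨j.1, by omega⟩ : Fin n) = j := by
          apply Fin.ext
          have := j.isLt
          simp only [hidx_def]
          omega
        show (if x ∈ P (idx ⟨j.1, by omega⟩) then true else false) = true
        rw [hixd, if_pos hj]
      · rintro ⟨i, hi⟩
        rw [hFeq]
        have hxm : x ∈ P (idx i) := by
          by_contra h
          rw [if_neg h] at hi
          exact Bool.false_ne_true hi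
        exact Set.mem_iUnion.mpr ⟨idx i, hxm⟩
  · rintro ⟨h, hmeet, hjoin, hneg, hFh⟩
    have hmem : ∀ x : L, x ∈ F ↔ ∃ i, h x i = true := by
      intro x
      rw [hFh]
      exact Iff.rfl
    have hmeet' : ∀ (x y : L) (i : Fin n), h (x ⊓ y) i = h x i ⊓ h y i := by
      intro x y i; rw [hmeet]; rfl
    have hjoin' : ∀ (x y : L) (i : Fin n), h (x ⊔ y) i = h x i ⊔ h y i := by
      intro x y i; rw [hjoin]; rfl
    have hmono : ∀ {x z : L}, x ≤ z → ∀ i, h x i ≤ h z i := by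
      intro x z hxz i
      have e : h (x ⊓ z) i = h x i ⊓ h z i := hmeet' x z i
      rw [inf_eq_left.mpr hxz] at e
      rw [e]
      exact inf_le_right
    have i0 : Fin n := ⟨0, hn⟩
    have bsup : ∀ b : Bool, (b ⊔ !b) = true := by decide
    have binf : ∀ b : Bool, (b ⊓ !b) = false := by decide
    have bfsup : ∀ b : Bool, (false ⊔ b) = b := by decide
    have btinf : ∀ b : Bool, (true ⊓ b) = b := by decide
    have x₀ : L := Classical.arbitrary L
    have hACf : AlmostComplete F := by
      intro x hx y
      obtain ⟨i, hi⟩ := (hmem x).mp hx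
      refine (hmem _).mpr ⟨i, ?_⟩
      rw [hmeet', hjoin', hneg, bsup, hi]
      decide
    have hnef : F.Nonempty := by
      refine ⟨x₀ ⊔ ∼x₀, (hmem _).mpr ⟨i0, ?_⟩⟩
      rw [hjoin', hneg, bsup]
    have hConf : AlmostConsistent F := by
      intro x y hxy
      obtain ⟨i, hi⟩ := (hmem _).mp hxy
      rw [hjoin', hmeet', hneg, binf, bfsup] at hi
      exact (hmem y).mpr ⟨i, hi⟩
    have hneuf : F ≠ Set.univ := by
      intro heq
      have hx : x₀ ⊓ ∼x₀ ∈ F := heq ▸ Set.mem_univ _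
      obtain ⟨i, hi⟩ := (hmem _).mp hx
      rw [hmeet', hneg, binf] at hi
      exact Bool.false_ne_true hi
    have hPrf : IsPrimeUpset F := by
      intro x y hxy
      obtain ⟨i, hi⟩ := (hmem _).mp hxy
      rw [hjoin'] at hi
      by_cases hx' : h x i = true
      · exact Or.inl ((hmem x).mpr ⟨i, hx'⟩)
      · have hx'' : h x i = false := by
          cases hb : h x i
          · rfl
          · exact absurd hb hx'
        rw [hx'', bfsup] at hi
        exact Or.inr ((hmem y).mpr ⟨i, hi⟩)
    refine ⟨⟨⟨hACf, hnef⟩, hConf, hneuf⟩, hPrf, hF, ?_⟩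
    intro Y hY hyp
    have hinf : ∀ (Z : Finset L) (hZ : Z.Nonempty), h (Z.inf' hZ id) = Z.inf' hZ h := by
      intro Z hZ
      induction hZ using Finset.Nonempty.cons_induction with
      | singleton a => simp only [Finset.inf'_singleton, id_eq]
      | cons a Z haZ hZ IH =>
        rw [Finset.inf'_cons hZ, Finset.inf'_cons hZ, id_eq, hmeet, IH]
    by_contra hnin
    have hnoti : ∀ i : Fin n, ∃ x, x ∈ Y ∧ h x i = false := by
      intro i
      by_contra hcon
      push_neg at hcon
      apply hnin
      refine (hmem _).mpr ⟨i, ?_⟩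
      rw [hinf Y hY, Finset.inf'_apply]
      have htrue : (true : Bool) ≤ Y.inf' hY fun x => h x i := by
        refine Finset.le_inf' hY _ fun b hb => ?_
        have := hcon b hb
        cases hb' : h b i
        · exact absurd hb' this
        · exact le_rfl
      have hle : Y.inf' hY (fun x => h x i) ≤ true := by
        cases hc : Y.inf' hY fun x => h x i <;> decide
      exact le_antisymm hle htrue
    choose w hw1 hw2 using hnoti
    have hXne : (Finset.univ.image w).Nonempty :=
      ⟨w i0, Finset.mem_image_of_mem _ (Finset.mem_univ i0)⟩
    have hXY : Finset.univ.image w ⊆ Y := by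
      intro x hx
      obtain ⟨i, _, rfl⟩ := Finset.mem_image.mp hx
      exact hw1 i
    have hXc : (Finset.univ.image w).card ≤ n := by
      refine le_trans Finset.card_image_le ?_
      rw [Finset.card_univ, Fintype.card_fin]
    have hXF := hyp _ hXne hXY hXc
    obtain ⟨i, hi⟩ := (hmem _).mp hXF
    have hle : (Finset.univ.image w).inf' hXne id ≤ w i :=
      Finset.inf'_le id (Finset.mem_image_of_mem _ (Finset.mem_univ i))
    have hcontra := hmono hle i
    rw [hi, hw2 i] at hcontra
    exact (by decide : ¬ ((true : Bool) ≤ false)) hcontra
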